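/- Let T be an n×n complex matrix, λ ∈ ℂ, ρ > 0, and let z_ℓ = λ + ρ·e^{2πiℓ/m} for ℓ = 0,…,m−1 be m equally spaced points on the circle Γ = {z : |z−λ| = ρ}. Suppose s_ℓ ≤ σ_min(z_ℓ I − T) for each ℓ, and set s* := min_ℓ s_ℓ − 2ρ·sin(π/(2m)). If s* > 0, then every z ∈ Γ satisfies σ_min(zI−T) ≥ s* > 0; in particular zI−T is invertible for all z ∈ Γ and sup_{z∈Γ} ‖(zI−T)^{-1}‖ ≤ 1/s*. -/

import Mathlib

open Matrix

/-- Spectral (ℓ²-operator) norm of a complex matrix. -/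
noncomputable def opNorm {m n : Type*} [Fintype m] [Fintype n] [DecidableEq m] [DecidableEq n]
    (M : Matrix m n ℂ) : ℝ :=
  ‖LinearMap.toContinuousLinearMap (Matrix.toEuclideanLin M)‖

/-- Smallest singular value of a square complex matrix, as the infimum of
`‖Mx‖` over the unit sphere. -/
noncomputable def smin {n : Type*} [Fintype n] [DecidableEq n] (M : Matrix n n ℂ) : ℝ :=
  ⨅ x : Metric.sphere (0 : EuclideanSpace ℂ n) 1,
    ‖Matrix.toEuclideanLin M (x : EuclideanSpace ℂ n)‖

section aux
variable {ι : Type*} [Fintype ι] [DecidableEq ι]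

lemma toEuclideanLin_one : Matrix.toEuclideanLin (1 : Matrix ι ι ℂ) = LinearMap.id := by
  ext x i
  simp [Matrix.toEuclideanLin_apply]

lemma smin_le (M : Matrix ι ι ℂ) (x : Metric.sphere (0 : EuclideanSpace ℂ ι) 1) :
    smin M ≤ ‖Matrix.toEuclideanLin M (x : EuclideanSpace ℂ ι)‖ := by
  apply ciInf_le
  exact ⟨0, by rintro _ ⟨y, rfl⟩; positivity⟩

lemma smin_mul_norm_le [Nonempty ι] (M : Matrix ι ι ℂ) (y : EuclideanSpace ℂ ι) :
    smin M * ‖y‖ ≤ ‖Matrix.toEuclideanLin M y‖ := by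
  rcases eq_or_ne y 0 with rfl | hy
  · simp
  · have hny : (0:ℝ) < ‖y‖ := norm_pos_iff.mpr hy
    have hu : ‖(‖y‖⁻¹ : ℂ) • y‖ = 1 := by
      rw [norm_smul]
      simp [hny.ne']
    have h1 := smin_le M ⟨(‖y‖⁻¹ : ℂ) • y, by simpa using hu⟩
    rw [_root_.map_smul, norm_smul] at h1
    have : smin M ≤ ‖y‖⁻¹ * ‖Matrix.toEuclideanLin M y‖ := by
      simpa [hny.ne'] using h1
    calc smin M * ‖y‖ ≤ (‖y‖⁻¹ * ‖Matrix.toEuclideanLin M y‖) * ‖y‖ := by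
          exact mul_le_mul_of_nonneg_right this hny.le
      _ = ‖Matrix.toEuclideanLin M y‖ := by field_simp

lemma smin_shift_lipschitz [Nonempty ι] (T : Matrix ι ι ℂ) (z w : ℂ) :
    smin (w • (1 : Matrix ι ι ℂ) - T) - ‖z - w‖ ≤ smin (z • (1 : Matrix ι ι ℂ) - T) := by
  haveI : Nonempty ↑(Metric.sphere (0 : EuclideanSpace ℂ ι) 1) :=
    (NormedSpace.sphere_nonempty.mpr zero_le_one).to_subtype
  apply le_ciInf
  rintro ⟨x, hx⟩
  have hx1 : ‖x‖ = 1 := by simpa using hx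
  have h1 := smin_le (w • (1 : Matrix ι ι ℂ) - T) ⟨x, hx⟩
  have hdiff : Matrix.toEuclideanLin (z • (1 : Matrix ι ι ℂ) - T) x
      - Matrix.toEuclideanLin (w • (1 : Matrix ι ι ℂ) - T) x = (z - w) • x := by
    rw [← LinearMap.sub_apply, ← map_sub]
    have : (z • (1 : Matrix ι ι ℂ) - T) - (w • (1 : Matrix ι ι ℂ) - T)
        = (z - w) • (1 : Matrix ι ι ℂ) := by
      rw [sub_smul]; abel
    rw [this, _root_.map_smul, toEuclideanLin_one]
    rfl
  have h2 : ‖Matrix.toEuclideanLin (w • (1 : Matrix ι ι ℂ) - T) x‖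
      ≤ ‖Matrix.toEuclideanLin (z • (1 : Matrix ι ι ℂ) - T) x‖ + ‖z - w‖ := by
    have := norm_sub_le (Matrix.toEuclideanLin (z • (1 : Matrix ι ι ℂ) - T) x)
      ((z - w) • x)
    have he : Matrix.toEuclideanLin (z • (1 : Matrix ι ι ℂ) - T) x - (z - w) • x
        = Matrix.toEuclideanLin (w • (1 : Matrix ι ι ℂ) - T) x := by
      rw [← hdiff]; abel
    rw [he] at this
    simpa [norm_smul, hx1] using this
  simp only [Subtype.coe_mk] at h1 ⊢
  linarith

lemma isUnit_of_smin_pos [Nonempty ι] (M : Matrix ι ι ℂ) (h : 0 < smin M) : IsUnit M := by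
  rw [Matrix.isUnit_iff_isUnit_det, isUnit_iff_ne_zero]
  intro hdet
  obtain ⟨v, hv, hMv⟩ := (Matrix.exists_mulVec_eq_zero_iff).mpr hdet
  set y : EuclideanSpace ℂ ι := (WithLp.equiv 2 (ι → ℂ)).symm v with hy
  have hMy : Matrix.toEuclideanLin M y = 0 := by
    rw [hy, WithLp.equiv_symm_apply, Matrix.toEuclideanLin_apply_piLp_toLp, hMv]
    simp
  have := smin_mul_norm_le M y
  rw [hMy] at this
  have hny : (0:ℝ) < ‖y‖ := by
    rw [norm_pos_iff]
    simpa [hy] using hv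
  nlinarith [norm_zero (E := EuclideanSpace ℂ ι)]

lemma opNorm_inv_le [Nonempty ι] (M : Matrix ι ι ℂ) (h : 0 < smin M) :
    opNorm M⁻¹ ≤ 1 / smin M := by
  have hU : IsUnit M := isUnit_of_smin_pos M h
  apply ContinuousLinearMap.opNorm_le_bound _ (by positivity)
  intro x
  rw [LinearMap.coe_toContinuousLinearMap']
  set y := Matrix.toEuclideanLin M⁻¹ x with hy
  have hMy : Matrix.toEuclideanLin M y = x := by
    rw [hy]
    have : Matrix.toEuclideanLin M (Matrix.toEuclideanLin M⁻¹ x)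
        = Matrix.toEuclideanLin (M * M⁻¹) x := by
      simp [Matrix.toEuclideanLin_apply, Matrix.mulVec_mulVec]
    rw [this, Matrix.mul_nonsing_inv M ((Matrix.isUnit_iff_isUnit_det M).mp hU), toEuclideanLin_one]
    rfl
  have h1 := smin_mul_norm_le M y
  rw [hMy] at h1
  rw [div_mul_eq_mul_div, le_div_iff₀ h, one_mul, mul_comm]
  exact h1

end aux

lemma chord_eq (a b : ℝ) :
    ‖Complex.exp (↑a * Complex.I) - Complex.exp (↑b * Complex.I)‖
      = 2 * |Real.sin ((a - b) / 2)| := by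
  have h1 : Complex.exp ((((a + b) / 2 : ℝ) : ℂ) * Complex.I)
      * Complex.exp ((((a - b) / 2 : ℝ) : ℂ) * Complex.I) = Complex.exp (↑a * Complex.I) := by
    rw [← Complex.exp_add]; congr 1; push_cast; ring
  have h2 : Complex.exp ((((a + b) / 2 : ℝ) : ℂ) * Complex.I)
      * Complex.exp (-(((a - b) / 2 : ℝ) : ℂ) * Complex.I) = Complex.exp (↑b * Complex.I) := by
    rw [← Complex.exp_add]; congr 1; push_cast; ring
  have hI : Complex.I * Complex.I = -1 := Complex.I_mul_I
  have key : Complex.exp (↑a * Complex.I) - Complex.exp (↑b * Complex.I)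
      = Complex.exp ((((a + b) / 2 : ℝ) : ℂ) * Complex.I)
        * (2 * Complex.I * Complex.sin ((((a - b) / 2 : ℝ) : ℂ))) := by
    rw [Complex.sin]
    linear_combination -h1 + h2 - Complex.exp ((((a + b) / 2 : ℝ) : ℂ) * Complex.I)
      * (Complex.exp (-(((a - b) / 2 : ℝ) : ℂ) * Complex.I)
        - Complex.exp ((((a - b) / 2 : ℝ) : ℂ) * Complex.I)) * hI
  rw [key, norm_mul, norm_mul, norm_mul, ← Complex.ofReal_sin, Complex.norm_real,
    Complex.norm_exp_ofReal_mul_I, Complex.norm_I]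
  norm_num

lemma sin_abs_le {u B : ℝ} (hB : B ≤ Real.pi / 2) (hu : |u| ≤ B) :
    |Real.sin u| ≤ Real.sin B := by
  have hB0 : 0 ≤ B := le_trans (abs_nonneg u) hu
  have hπ := Real.pi_pos
  obtain ⟨hl, hr⟩ := abs_le.mp hu
  rcases le_or_gt 0 u with h | h
  · rw [abs_of_nonneg (Real.sin_nonneg_of_nonneg_of_le_pi h (by linarith))]
    exact Real.sin_le_sin_of_le_of_le_pi_div_two (by linarith) hB hr
  · rw [abs_of_nonpos (Real.sin_nonpos_of_nonpos_of_neg_pi_le h.le (by linarith)), ← Real.sin_neg]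
    exact Real.sin_le_sin_of_le_of_le_pi_div_two (by linarith) hB (by linarith)

lemma covering (m : ℕ) (ρ : ℝ) (hρ : 0 < ρ) (lam z : ℂ) (hz : ‖z - lam‖ = ρ) :
    ∃ ℓ : Fin (m + 1),
      ‖z - (lam + ρ * Complex.exp (2 * Real.pi * Complex.I * ((ℓ : ℕ) : ℂ) / ((m : ℂ) + 1)))‖
        ≤ 2 * ρ * Real.sin (Real.pi / (2 * ((m : ℝ) + 1))) := by
  have hπ := Real.pi_pos
  have hm1 : (0:ℝ) < (m:ℝ) + 1 := by positivity
  set θ := (z - lam).arg with hθ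
  have hzexp : z - lam = (ρ : ℂ) * Complex.exp (↑θ * Complex.I) := by
    have h := Complex.norm_mul_exp_arg_mul_I (z - lam)
    have habs : ((‖z - lam‖ : ℝ) : ℂ) = (ρ : ℂ) := by
      rw [hz]
    rw [habs] at h
    exact h.symm
  set k : ℤ := round (θ * ((m:ℝ) + 1) / (2 * Real.pi)) with hk
  have hkmod_nonneg : 0 ≤ k % ((m:ℤ) + 1) := Int.emod_nonneg k (by positivity)
  have hkmod_lt : k % ((m:ℤ) + 1) < (m:ℤ) + 1 := Int.emod_lt_of_pos k (by positivity)
  set r : ℤ := k % ((m:ℤ) + 1) with hr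
  set q : ℤ := k / ((m:ℤ) + 1) with hq'
  refine ⟨⟨r.toNat, by omega⟩, ?_⟩
  set φ : ℝ := 2 * Real.pi * (k : ℝ) / ((m:ℝ) + 1) with hφ
  have hm1c : ((m:ℂ) + 1) ≠ 0 := by
    have h : ((m:ℂ) + 1) = (((m:ℝ) + 1 : ℝ) : ℂ) := by push_cast; ring
    rw [h]
    exact_mod_cast ne_of_gt hm1
  have hq : ((m:ℤ) + 1) * q + r = k := Int.mul_ediv_add_emod k _
  have hqC : ((m:ℂ) + 1) * (q:ℂ) + (r:ℂ) = (k:ℂ) := by exact_mod_cast hq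
  have hang : (2 * Real.pi * Complex.I * ((r.toNat : ℕ) : ℂ) / ((m : ℂ) + 1))
      = ↑φ * Complex.I - (q : ℂ) * (2 * Real.pi * Complex.I) := by
    rw [show ((r.toNat : ℕ) : ℂ) = (r : ℂ) by exact_mod_cast congrArg Int.cast (Int.toNat_of_nonneg hkmod_nonneg)]
    rw [hφ]
    push_cast
    field_simp
    try linear_combination (2 * (Real.pi:ℂ) * Complex.I) * hqC
    try linear_combination
    linear_combination hqC
  have hexpeq : Complex.exp (2 * Real.pi * Complex.I * ((r.toNat : ℕ) : ℂ) / ((m : ℂ) + 1))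
      = Complex.exp (↑φ * Complex.I) := by
    rw [hang, Complex.exp_sub, Complex.exp_int_mul_two_pi_mul_I, div_one]
  have hdiff : z - (lam + ρ * Complex.exp (2 * Real.pi * Complex.I * ((r.toNat : ℕ) : ℂ) / ((m : ℂ) + 1)))
      = (ρ : ℂ) * (Complex.exp (↑θ * Complex.I) - Complex.exp (↑φ * Complex.I)) := by
    rw [hexpeq, mul_sub, ← hzexp]
    ring
  rw [hdiff, norm_mul, Complex.norm_real, Real.norm_eq_abs, abs_of_pos hρ, chord_eq]
  -- angle bound
  have h1 : |θ * ((m:ℝ)+1) / (2 * Real.pi) - (k:ℝ)| ≤ 1/2 := by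
    rw [hk]; exact abs_sub_round _
  have h2 : |θ - φ| ≤ Real.pi / ((m:ℝ)+1) := by
    have he : θ - φ = (2 * Real.pi / ((m:ℝ)+1)) * (θ * ((m:ℝ)+1) / (2 * Real.pi) - (k:ℝ)) := by
      rw [hφ]; field_simp
    rw [he, abs_mul, abs_of_pos (by positivity : (0:ℝ) < 2 * Real.pi / ((m:ℝ)+1))]
    calc 2 * Real.pi / ((m:ℝ)+1) * |θ * ((m:ℝ)+1) / (2 * Real.pi) - (k:ℝ)|
        ≤ 2 * Real.pi / ((m:ℝ)+1) * (1/2) := by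
          apply mul_le_mul_of_nonneg_left h1 (by positivity)
      _ = Real.pi / ((m:ℝ)+1) := by ring
  have h3 : |(θ - φ)/2| ≤ Real.pi / (2 * ((m:ℝ)+1)) := by
    rw [abs_div, abs_two, show Real.pi / (2 * ((m:ℝ)+1)) = (Real.pi / ((m:ℝ)+1))/2 by rw [div_div, mul_comm]]
    linarith
  have h4 : Real.pi / (2 * ((m:ℝ)+1)) ≤ Real.pi / 2 := by
    rw [div_le_div_iff₀ (by positivity) (by norm_num)]
    nlinarith
  have h5 := sin_abs_le h4 h3
  nlinarith [h5, hρ]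

/-- Certified resolvent bound on a sampled circle: `m+1` equally spaced sample
points with certified lower bounds `s_ℓ ≤ σ_min(z_ℓ I - T)` and Lipschitz
propagation give a uniform lower bound `s* > 0` for `σ_min(zI - T)` on the whole
circle, hence invertibility and `‖(zI-T)⁻¹‖ ≤ 1/s*`. -/
theorem sampled_circle_resolvent_bound {n m : ℕ}
    (T : Matrix (Fin n) (Fin n) ℂ) (lam : ℂ) (ρ : ℝ) (hρ : 0 < ρ)
    (s : Fin (m + 1) → ℝ)
    (hs : ∀ ℓ : Fin (m + 1),
      s ℓ ≤ smin ((lam + ρ * Complex.exp (2 * Real.pi * Complex.I * ((ℓ : ℕ) : ℂ) / ((m : ℂ) + 1)))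
        • (1 : Matrix (Fin n) (Fin n) ℂ) - T))
    (hpos : 0 < Finset.univ.inf' Finset.univ_nonempty s
        - 2 * ρ * Real.sin (Real.pi / (2 * ((m : ℝ) + 1)))) :
    ∀ z : ℂ, ‖z - lam‖ = ρ →
      Finset.univ.inf' Finset.univ_nonempty s
          - 2 * ρ * Real.sin (Real.pi / (2 * ((m : ℝ) + 1)))
        ≤ smin (z • (1 : Matrix (Fin n) (Fin n) ℂ) - T) ∧
      IsUnit (z • (1 : Matrix (Fin n) (Fin n) ℂ) - T) ∧
      opNorm ((z • (1 : Matrix (Fin n) (Fin n) ℂ) - T)⁻¹)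
        ≤ 1 / (Finset.univ.inf' Finset.univ_nonempty s
            - 2 * ρ * Real.sin (Real.pi / (2 * ((m : ℝ) + 1)))) := by
  intro z hz
  have hπ := Real.pi_pos
  have hm1 : (0:ℝ) < (m:ℝ) + 1 := by positivity
  have hΔ : 0 ≤ 2 * ρ * Real.sin (Real.pi / (2 * ((m : ℝ) + 1))) := by
    have hsin : 0 ≤ Real.sin (Real.pi / (2 * ((m : ℝ) + 1))) := by
      apply Real.sin_nonneg_of_nonneg_of_le_pi (by positivity)
      rw [div_le_iff₀ (by positivity)]
      nlinarith
    positivity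
  cases n with
  | zero =>
    exfalso
    haveI hempty : IsEmpty (Metric.sphere (0 : EuclideanSpace ℂ (Fin 0)) 1) := by
      constructor
      rintro ⟨x, hx⟩
      have hx0 : x = 0 := Subsingleton.elim x 0
      rw [Metric.mem_sphere, hx0] at hx
      simp at hx
    have hzero : ∀ M : Matrix (Fin 0) (Fin 0) ℂ, smin M = 0 := fun M => Real.iInf_of_isEmpty _
    have h0 := hs 0
    rw [hzero] at h0
    have hle := Finset.inf'_le s (Finset.mem_univ (0 : Fin (m+1)))
    linarith
  | succ n =>
    obtain ⟨ℓ, hℓ⟩ := covering m ρ hρ lam z hz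
    set zℓ : ℂ := lam + ρ * Complex.exp (2 * Real.pi * Complex.I * ((ℓ : ℕ) : ℂ) / ((m : ℂ) + 1))
      with hzℓ
    have hlip := smin_shift_lipschitz T z zℓ
    have hsℓ := hs ℓ
    have hinf := Finset.inf'_le s (Finset.mem_univ ℓ)
    have hchord : ‖z - zℓ‖ ≤ 2 * ρ * Real.sin (Real.pi / (2 * ((m : ℝ) + 1))) := hℓ
    have key : Finset.univ.inf' Finset.univ_nonempty s
        - 2 * ρ * Real.sin (Real.pi / (2 * ((m : ℝ) + 1)))
        ≤ smin (z • (1 : Matrix (Fin (n+1)) (Fin (n+1)) ℂ) - T) := by linarith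
    have hsminpos : 0 < smin (z • (1 : Matrix (Fin (n+1)) (Fin (n+1)) ℂ) - T) :=
      lt_of_lt_of_le hpos key
    refine ⟨key, isUnit_of_smin_pos _ hsminpos, ?_⟩
    calc opNorm ((z • (1 : Matrix (Fin (n+1)) (Fin (n+1)) ℂ) - T)⁻¹)
        ≤ 1 / smin (z • (1 : Matrix (Fin (n+1)) (Fin (n+1)) ℂ) - T) :=
          opNorm_inv_le _ hsminpos
      _ ≤ 1 / (Finset.univ.inf' Finset.univ_nonempty s
            - 2 * ρ * Real.sin (Real.pi / (2 * ((m : ℝ) + 1)))) :=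
          one_div_le_one_div_of_le hpos key
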